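/- 1-Lipschitz property of wave operators with respect to the coefficient sup-metric: let f = min_{(i,j)∈B}(ix+jy+a_{ij}) and g = min_{(i,j)∈B}(ix+jy+b_{ij}) be two Ω-tropical series over the same index set B in canonical form, define ρ(f,g) = sup_B |a_{ij} − b_{ij}|. Then for any p ∈ Ω°, ρ(G_p f, G_p g) ≤ ρ(f,g). -/

import Mathlib

def IsOmegaTropSeries (Ω : Set (ℝ × ℝ)) (f : ℝ × ℝ → ℝ) : Prop :=
  ContinuousOn f Ω ∧ (∀ z ∈ Ω, 0 ≤ f z) ∧ (∀ z ∈ frontier Ω, f z = 0) ∧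
  ∃ (A : Set (ℤ × ℤ)) (a : ℤ × ℤ → ℝ), ∀ z ∈ interior Ω,
    IsGLB {v : ℝ | ∃ ij ∈ A, v = (ij.1 : ℝ) * z.1 + (ij.2 : ℝ) * z.2 + a ij} (f z)

def waveSet (Ω P : Set (ℝ × ℝ)) (f : ℝ × ℝ → ℝ) : Set (ℝ × ℝ → ℝ) :=
  {g | IsOmegaTropSeries Ω g ∧ (∀ z ∈ Ω, f z ≤ g z) ∧ ∀ p ∈ P, ¬ DifferentiableAt ℝ g p}

noncomputable def waveOp (Ω P : Set (ℝ × ℝ)) (f : ℝ × ℝ → ℝ) (z : ℝ × ℝ) : ℝ :=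
  sInf {v : ℝ | ∃ g ∈ waveSet Ω P f, v = g z}

/-- The canonical (minimal) coefficient of the monomial `ix+jy` in a representation
of `h` as a tropical series on `Ω`. -/
noncomputable def canonCoef (Ω : Set (ℝ × ℝ)) (h : ℝ × ℝ → ℝ) (ij : ℤ × ℤ) : ℝ :=
  sSup ((fun z => h z - (ij.1 : ℝ) * z.1 - (ij.2 : ℝ) * z.2) '' Ω)

lemma isGLB_add' {S T : Set ℝ} {x y : ℝ} (hS : IsGLB S x) (hT : IsGLB T y) :
    IsGLB {v : ℝ | ∃ s ∈ S, ∃ t ∈ T, v = s + t} (x + y) := by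
  constructor
  · rintro v ⟨s, hs, t, ht, rfl⟩
    exact add_le_add (hS.1 hs) (hT.1 ht)
  · intro c hc
    have h2 : c - x ≤ y := by
      refine hT.2 (fun t ht => ?_)
      have h1 : c - t ≤ x := by
        refine hS.2 (fun s hs => ?_)
        have := hc ⟨s, hs, t, ht, rfl⟩
        linarith
      linarith
    linarith

lemma isGLB_add_const' {S : Set ℝ} {x r : ℝ} (hS : IsGLB S x) :
    IsGLB {v : ℝ | ∃ s ∈ S, v = s + r} (x + r) := by
  constructor
  · rintro v ⟨s, hs, rfl⟩
    exact add_le_add_left (hS.1 hs) r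
  · intro c hc
    have : c - r ≤ x := hS.2 (fun s hs => by have := hc ⟨s, hs, rfl⟩; linarith)
    linarith

lemma isGLB_mul' {S : Set ℝ} {x c : ℝ} (hc : 0 < c) (hS : IsGLB S x) :
    IsGLB {v : ℝ | ∃ s ∈ S, v = c * s} (c * x) := by
  constructor
  · rintro v ⟨s, hs, rfl⟩
    exact mul_le_mul_of_nonneg_left (hS.1 hs) hc.le
  · intro d hd
    have hdc : d / c ≤ x := hS.2 (fun s hs => by
      have := hd ⟨s, hs, rfl⟩
      exact (div_le_iff₀' hc).2 this)
    calc d = c * (d / c) := by field_simp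
    _ ≤ c * x := mul_le_mul_of_nonneg_left hdc hc.le

lemma isGLB_fiberInf (R : Set ((ℤ × ℤ) × ℝ))
    (hbdd : ∀ w : ℤ × ℤ, BddBelow {d : ℝ | (w, d) ∈ R})
    (z : ℝ × ℝ) (x : ℝ)
    (hx : IsGLB {v : ℝ | ∃ w ∈ R, v = (w.1.1 : ℝ) * z.1 + (w.1.2 : ℝ) * z.2 + w.2} x) :
    IsGLB {v : ℝ | ∃ ij ∈ {w : ℤ × ℤ | ∃ d, (w, d) ∈ R},
      v = (ij.1 : ℝ) * z.1 + (ij.2 : ℝ) * z.2 + sInf {d : ℝ | (ij, d) ∈ R}} x := by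
  have hlb : lowerBounds {v : ℝ | ∃ w ∈ R, v = (w.1.1 : ℝ) * z.1 + (w.1.2 : ℝ) * z.2 + w.2}
      = lowerBounds {v : ℝ | ∃ ij ∈ {w : ℤ × ℤ | ∃ d, (w, d) ∈ R},
        v = (ij.1 : ℝ) * z.1 + (ij.2 : ℝ) * z.2 + sInf {d : ℝ | (ij, d) ∈ R}} := by
    ext c
    constructor
    · rintro hc v ⟨ij, ⟨d₀, hd₀⟩, rfl⟩
      have h1 : c - (ij.1 : ℝ) * z.1 - (ij.2 : ℝ) * z.2 ≤ sInf {d : ℝ | (ij, d) ∈ R} := by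
        refine le_csInf ⟨d₀, hd₀⟩ (fun d hd => ?_)
        have := hc ⟨(ij, d), hd, rfl⟩
        linarith
      linarith
    · rintro hc v ⟨w, hw, rfl⟩
      have h1 : sInf {d : ℝ | (w.1, d) ∈ R} ≤ w.2 := csInf_le (hbdd w.1) (by simpa using hw)
      have h2 := hc ⟨w.1, ⟨w.2, by simpa using hw⟩, rfl⟩
      linarith
  have hx' : IsGreatest (lowerBounds {v : ℝ | ∃ w ∈ R,
      v = (w.1.1 : ℝ) * z.1 + (w.1.2 : ℝ) * z.2 + w.2}) x := hx
  rw [hlb] at hx'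
  exact hx'

lemma key_construct (Ω : Set (ℝ × ℝ)) (hcl : IsClosed Ω)
    (f g : ℝ × ℝ → ℝ) (hf : IsOmegaTropSeries Ω f)
    (B : Set (ℤ × ℤ)) (a : ℤ × ℤ → ℝ)
    (hfB : ∀ z ∈ Ω,
      IsGLB {v : ℝ | ∃ ij ∈ B, v = (ij.1 : ℝ) * z.1 + (ij.2 : ℝ) * z.2 + a ij} (f z))
    (p : ℝ × ℝ) (hp : p ∈ interior Ω)
    (r : ℝ) (hr0 : 0 ≤ r) (hfg : ∀ z ∈ Ω, f z ≤ g z + r)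
    (h : ℝ × ℝ → ℝ) (hh : h ∈ waveSet Ω {p} g) :
    ∃ h' ∈ waveSet Ω {p} f, ∀ z ∈ Ω, h' z ≤ h z + r := by
  obtain ⟨⟨hcont, hnn, hbd, A, c, hrep⟩, hge, hnd⟩ := hh
  have hndp : ¬ DifferentiableAt ℝ h p := hnd p rfl
  have hpΩ : p ∈ Ω := interior_subset hp
  have hΩn : Ω ∈ nhds p := mem_interior_iff_mem_nhds.mp hp
  -- h p > 0
  obtain ⟨ε, hε, hball⟩ := Metric.isOpen_iff.mp isOpen_interior p hp
  have hp0 : 0 < h p := by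
    rcases lt_or_eq_of_le (hnn p hpΩ) with h0 | h0
    · exact h0
    exfalso
    have hzero : ∀ z ∈ Metric.ball p ε, h z = 0 := by
      intro z hz
      set z' : ℝ × ℝ := (2 * p.1 - z.1, 2 * p.2 - z.2) with hz'def
      have hz'ball : z' ∈ Metric.ball p ε := by
        have : dist z' p = dist z p := by
          simp only [Prod.dist_eq, Real.dist_eq, hz'def]
          rw [show (2 * p.1 - z.1, 2 * p.2 - z.2).1 - p.1 = -(z.1 - p.1) by simp; ring,
            show (2 * p.1 - z.1, 2 * p.2 - z.2).2 - p.2 = -(z.2 - p.2) by simp; ring,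
            abs_neg, abs_neg]
        rwa [Metric.mem_ball, this, ← Metric.mem_ball]
      have hzint : z ∈ interior Ω := hball hz
      have hz'int : z' ∈ interior Ω := hball hz'ball
      have hmid : (h z + h z') / 2 ≤ h p := by
        refine (hrep p hp).2 ?_
        rintro v ⟨ij, hij, rfl⟩
        have e1 := (hrep z hzint).1 ⟨ij, hij, rfl⟩
        have e2 := (hrep z' hz'int).1 ⟨ij, hij, rfl⟩
        have hz'1 : z'.1 = 2 * p.1 - z.1 := rfl
        have hz'2 : z'.2 = 2 * p.2 - z.2 := rfl
        rw [hz'1, hz'2] at e2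
        nlinarith [e1, e2]
      have h1 : 0 ≤ h z := hnn z (interior_subset hzint)
      have h2 : 0 ≤ h z' := hnn z' (interior_subset hz'int)
      linarith [hmid, h1, h2, h0.symm ▸ (le_refl (h p))]
    have hev : h =ᶠ[nhds p] fun _ => (0 : ℝ) := by
      filter_upwards [Metric.ball_mem_nhds p hε] with z hz using hzero z hz
    exact hndp (hev.differentiableAt_iff.mpr (differentiableAt_const 0))
  -- choose n
  obtain ⟨N, hN⟩ := exists_nat_gt ((h p + r - f p) / h p)
  set n : ℕ := N + 1 with hn_def
  have hn1 : 1 ≤ n := Nat.le_add_left 1 N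
  have hnpos : (0 : ℝ) < (n : ℝ) := by exact_mod_cast hn1
  have hnbig : h p + r < (n : ℝ) * h p + f p := by
    have h1 : (h p + r - f p) / h p < (n : ℝ) := by
      calc (h p + r - f p) / h p < (N : ℝ) := hN
      _ ≤ (n : ℝ) := by exact_mod_cast Nat.le_succ N
    have := (div_lt_iff₀ hp0).mp h1
    linarith
  -- the new function
  set h' : ℝ × ℝ → ℝ := fun z => min (h z + r) ((n : ℝ) * h z + f z) with h'def
  have hfle : ∀ z ∈ Ω, f z ≤ h' z := by
    intro z hz
    refine le_min (by linarith [hfg z hz, hge z hz]) ?_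
    nlinarith [hnn z hz, hnpos]
  have h'le : ∀ z ∈ Ω, h' z ≤ h z + r := fun z _ => min_le_left _ _
  -- coefficient relation
  set R : Set ((ℤ × ℤ) × ℝ) :=
    {w | (w.1 ∈ A ∧ w.2 = c w.1 + r) ∨
      ∃ u ∈ A, ∃ vb ∈ B, w.1 = ((n : ℤ) * u.1 + vb.1, (n : ℤ) * u.2 + vb.2) ∧
        w.2 = (n : ℝ) * c u + a vb} with hRdef
  have hSR : ∀ z ∈ interior Ω,
      IsGLB {v : ℝ | ∃ w ∈ R, v = (w.1.1 : ℝ) * z.1 + (w.1.2 : ℝ) * z.2 + w.2} (h' z) := by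
    intro z hz
    have hzΩ : z ∈ Ω := interior_subset hz
    have hglb1 : IsGLB {v : ℝ | ∃ s ∈ {v : ℝ | ∃ ij ∈ A,
        v = (ij.1 : ℝ) * z.1 + (ij.2 : ℝ) * z.2 + c ij}, v = s + r} (h z + r) :=
      isGLB_add_const' (hrep z hz)
    have hglbn : IsGLB {v : ℝ | ∃ s ∈ {v : ℝ | ∃ ij ∈ A,
        v = (ij.1 : ℝ) * z.1 + (ij.2 : ℝ) * z.2 + c ij}, v = (n : ℝ) * s} ((n : ℝ) * h z) :=
      isGLB_mul' hnpos (hrep z hz)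
    have hglb2 : IsGLB {v : ℝ | ∃ s ∈ {v : ℝ | ∃ s' ∈ {v : ℝ | ∃ ij ∈ A,
        v = (ij.1 : ℝ) * z.1 + (ij.2 : ℝ) * z.2 + c ij}, v = (n : ℝ) * s'},
        ∃ t ∈ {v : ℝ | ∃ ij ∈ B, v = (ij.1 : ℝ) * z.1 + (ij.2 : ℝ) * z.2 + a ij},
        v = s + t} ((n : ℝ) * h z + f z) :=
      isGLB_add' hglbn (hfB z hzΩ)
    have hunion := hglb1.union hglb2
    have hseteq : {v : ℝ | ∃ w ∈ R, v = (w.1.1 : ℝ) * z.1 + (w.1.2 : ℝ) * z.2 + w.2}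
        = {v : ℝ | ∃ s ∈ {v : ℝ | ∃ ij ∈ A,
            v = (ij.1 : ℝ) * z.1 + (ij.2 : ℝ) * z.2 + c ij}, v = s + r}
          ∪ {v : ℝ | ∃ s ∈ {v : ℝ | ∃ s' ∈ {v : ℝ | ∃ ij ∈ A,
            v = (ij.1 : ℝ) * z.1 + (ij.2 : ℝ) * z.2 + c ij}, v = (n : ℝ) * s'},
            ∃ t ∈ {v : ℝ | ∃ ij ∈ B, v = (ij.1 : ℝ) * z.1 + (ij.2 : ℝ) * z.2 + a ij},
            v = s + t} := by
      ext v
      constructor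
      · rintro ⟨w, hw, rfl⟩
        rcases hw with ⟨hA, he⟩ | ⟨u, hu, vb, hvb, h1, h2⟩
        · left
          exact ⟨(w.1.1 : ℝ) * z.1 + (w.1.2 : ℝ) * z.2 + c w.1, ⟨w.1, hA, rfl⟩,
            by rw [he]; ring⟩
        · right
          refine ⟨(n : ℝ) * ((u.1 : ℝ) * z.1 + (u.2 : ℝ) * z.2 + c u),
            ⟨(u.1 : ℝ) * z.1 + (u.2 : ℝ) * z.2 + c u, ⟨u, hu, rfl⟩, rfl⟩,
            (vb.1 : ℝ) * z.1 + (vb.2 : ℝ) * z.2 + a vb, ⟨vb, hvb, rfl⟩, ?_⟩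
          rw [h1, h2]
          push_cast
          ring
      · rintro (⟨s, ⟨ij, hij, rfl⟩, rfl⟩ | ⟨s, ⟨s', ⟨u, hu, rfl⟩, rfl⟩, t, ⟨vb, hvb, rfl⟩, rfl⟩)
        · exact ⟨(ij, c ij + r), Or.inl ⟨hij, rfl⟩, by ring⟩
        · refine ⟨(((n : ℤ) * u.1 + vb.1, (n : ℤ) * u.2 + vb.2), (n : ℝ) * c u + a vb),
            Or.inr ⟨u, hu, vb, hvb, rfl, rfl⟩, ?_⟩
          push_cast
          ring
    rw [hseteq]
    exact hunion
  have hbdd : ∀ w : ℤ × ℤ, BddBelow {d : ℝ | (w, d) ∈ R} := by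
    intro w
    refine ⟨h' p - (w.1 : ℝ) * p.1 - (w.2 : ℝ) * p.2, fun d hd => ?_⟩
    have := (hSR p hp).1 ⟨(w, d), hd, rfl⟩
    linarith
  have htrop : IsOmegaTropSeries Ω h' := by
    refine ⟨?_, ?_, ?_, ?_⟩
    · have hc2 : ContinuousOn (fun z : ℝ × ℝ => min (h z + r) ((n : ℝ) * h z + f z)) Ω :=
        ContinuousOn.inf (hcont.add continuousOn_const)
          ((continuousOn_const.mul hcont).add hf.1)
      rw [h'def]
      exact hc2
    · intro z hz
      exact le_trans (hf.2.1 z hz) (hfle z hz)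
    · intro z hz
      have hzΩ : z ∈ Ω := hcl.frontier_subset hz
      have h1 : h z = 0 := hbd z hz
      have h2 : f z = 0 := hf.2.2.1 z hz
      simp [h'def, h1, h2, min_eq_right hr0]
    · refine ⟨{w : ℤ × ℤ | ∃ d, (w, d) ∈ R}, fun ij => sInf {d : ℝ | (ij, d) ∈ R},
        fun z hz => isGLB_fiberInf R hbdd z (h' z) (hSR z hz)⟩
  have hndh' : ¬ DifferentiableAt ℝ h' p := by
    have hcat : ContinuousAt h p := hcont.continuousAt hΩn
    have hfat : ContinuousAt f p := hf.1.continuousAt hΩn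
    have hφ : ContinuousAt (fun z => (n : ℝ) * h z + f z - (h z + r)) p := by
      fun_prop
    have hev : ∀ᶠ z in nhds p, h' z = h z + r := by
      have hpos : (0 : ℝ) < (n : ℝ) * h p + f p - (h p + r) := by linarith
      filter_upwards [hφ.eventually (eventually_gt_nhds hpos)] with z hz
      have : h z + r ≤ (n : ℝ) * h z + f z := by linarith
      simp [h'def, min_eq_left this]
    intro hdiff
    have h1 : DifferentiableAt ℝ (fun z => h z + r) p :=
      (Filter.EventuallyEq.differentiableAt_iff hev).mp hdiff
    have h2 : DifferentiableAt ℝ (fun z => h z + r + -r) p := h1.add_const (-r)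
    simp only [add_neg_cancel_right] at h2
    exact hndp h2
  refine ⟨h', ⟨htrop, hfle, fun q hq => ?_⟩, h'le⟩
  rw [Set.mem_singleton_iff] at hq
  subst hq
  exact hndh'

lemma sup_transfer {Ω : Set (ℝ × ℝ)} (hne : Ω.Nonempty) {φ ψ : ℝ × ℝ → ℝ} {r : ℝ}
    (hr0 : 0 ≤ r) (hb : ∀ z ∈ Ω, |φ z - ψ z| ≤ r) :
    |sSup (φ '' Ω) - sSup (ψ '' Ω)| ≤ r := by
  have h1 : ∀ z ∈ Ω, φ z ≤ ψ z + r := fun z hz => by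
    have := (abs_le.mp (hb z hz)).2; linarith
  have h2 : ∀ z ∈ Ω, ψ z ≤ φ z + r := fun z hz => by
    have := (abs_le.mp (hb z hz)).1; linarith
  have htrans : ∀ u v : ℝ × ℝ → ℝ, (∀ z ∈ Ω, u z ≤ v z + r) →
      BddAbove (v '' Ω) → BddAbove (u '' Ω) := by
    rintro u v huv ⟨M, hM⟩
    refine ⟨M + r, ?_⟩
    rintro x ⟨z, hz, rfl⟩
    have hvz : v z ≤ M := hM ⟨z, hz, rfl⟩
    linarith [huv z hz]
  have honeside : ∀ u v : ℝ × ℝ → ℝ, (∀ z ∈ Ω, u z ≤ v z + r) →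
      BddAbove (v '' Ω) → sSup (u '' Ω) ≤ sSup (v '' Ω) + r := by
    intro u v huv hV
    refine csSup_le (hne.image u) ?_
    rintro x ⟨z, hz, rfl⟩
    exact le_trans (huv z hz) (add_le_add_left (le_csSup hV ⟨z, hz, rfl⟩) r)
  by_cases hU : BddAbove (φ '' Ω)
  · have hV : BddAbove (ψ '' Ω) := htrans ψ φ h2 hU
    exact abs_sub_le_iff.mpr
      ⟨by linarith [honeside φ ψ h1 hV], by linarith [honeside ψ φ h2 hU]⟩
  · have hV : ¬ BddAbove (ψ '' Ω) := fun hV => hU (htrans φ ψ h1 hV)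
    rw [Real.sSup_of_not_bddAbove hU, Real.sSup_of_not_bddAbove hV]
    simpa using hr0

/-- 1-Lipschitz property of the wave operator for the coefficient sup-metric: if the
canonical coefficients of two `Ω`-tropical series `f, g` (over the same index set `B`)
differ by at most `r`, then so do the canonical coefficients of `G_p f` and `G_p g`. -/
theorem stmt_13 (Ω : Set (ℝ × ℝ)) (hconv : Convex ℝ Ω) (hcl : IsClosed Ω)
    (hint : (interior Ω).Nonempty)
    (hadm : ∃ ij : ℤ × ℤ, ij ≠ (0, 0) ∧
      BddBelow ((fun p : ℝ × ℝ => (ij.1 : ℝ) * p.1 + (ij.2 : ℝ) * p.2) '' Ω))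
    (B : Set (ℤ × ℤ)) (a b : ℤ × ℤ → ℝ)
    (f g : ℝ × ℝ → ℝ) (hf : IsOmegaTropSeries Ω f) (hg : IsOmegaTropSeries Ω g)
    (hfB : ∀ z ∈ Ω,
      IsGLB {v : ℝ | ∃ ij ∈ B, v = (ij.1 : ℝ) * z.1 + (ij.2 : ℝ) * z.2 + a ij} (f z))
    (hgB : ∀ z ∈ Ω,
      IsGLB {v : ℝ | ∃ ij ∈ B, v = (ij.1 : ℝ) * z.1 + (ij.2 : ℝ) * z.2 + b ij} (g z))
    (hacan : ∀ ij ∈ B, a ij = canonCoef Ω f ij)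
    (hbcan : ∀ ij ∈ B, b ij = canonCoef Ω g ij)
    (p : ℝ × ℝ) (hp : p ∈ interior Ω)
    (r : ℝ) (hr : ∀ ij ∈ B, |a ij - b ij| ≤ r) :
    ∀ ij ∈ B, |canonCoef Ω (waveOp Ω {p} f) ij - canonCoef Ω (waveOp Ω {p} g) ij| ≤ r := by
  intro ij hij
  have hr0 : 0 ≤ r := le_trans (abs_nonneg _) (hr ij hij)
  have hpΩ : p ∈ Ω := interior_subset hp
  have hΩne : Ω.Nonempty := ⟨p, hpΩ⟩
  have hfg : ∀ z ∈ Ω, f z ≤ g z + r := by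
    intro z hz
    have hlb : f z - r ∈ lowerBounds
        {v : ℝ | ∃ ij ∈ B, v = (ij.1 : ℝ) * z.1 + (ij.2 : ℝ) * z.2 + b ij} := by
      rintro v ⟨uv, huv, rfl⟩
      have h1 := (hfB z hz).1 ⟨uv, huv, rfl⟩
      have h2 : a uv - b uv ≤ r := (abs_le.mp (hr uv huv)).2
      linarith
    linarith [(hgB z hz).2 hlb]
  have hgf : ∀ z ∈ Ω, g z ≤ f z + r := by
    intro z hz
    have hlb : g z - r ∈ lowerBounds
        {v : ℝ | ∃ ij ∈ B, v = (ij.1 : ℝ) * z.1 + (ij.2 : ℝ) * z.2 + a ij} := by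
      rintro v ⟨uv, huv, rfl⟩
      have h1 := (hgB z hz).1 ⟨uv, huv, rfl⟩
      have h2 : -r ≤ a uv - b uv := (abs_le.mp (hr uv huv)).1
      linarith
    linarith [(hfB z hz).2 hlb]
  have hpt : ∀ z ∈ Ω, |waveOp Ω {p} f z - waveOp Ω {p} g z| ≤ r := by
    by_cases hgne : (waveSet Ω {p} g).Nonempty
    · obtain ⟨h₀, hh₀⟩ := hgne
      obtain ⟨h₀', hh₀', _⟩ := key_construct Ω hcl f g hf B a hfB p hp r hr0 hfg h₀ hh₀
      intro z hz
      have hSfne : {v : ℝ | ∃ k ∈ waveSet Ω {p} f, v = k z}.Nonempty :=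
        ⟨h₀' z, h₀', hh₀', rfl⟩
      have hSgne : {v : ℝ | ∃ k ∈ waveSet Ω {p} g, v = k z}.Nonempty :=
        ⟨h₀ z, h₀, hh₀, rfl⟩
      have hbddf : BddBelow {v : ℝ | ∃ k ∈ waveSet Ω {p} f, v = k z} :=
        ⟨f z, by rintro v ⟨k, hk, rfl⟩; exact hk.2.1 z hz⟩
      have hbddg : BddBelow {v : ℝ | ∃ k ∈ waveSet Ω {p} g, v = k z} :=
        ⟨g z, by rintro v ⟨k, hk, rfl⟩; exact hk.2.1 z hz⟩
      have claim1 : waveOp Ω {p} f z ≤ waveOp Ω {p} g z + r := by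
        rw [waveOp, waveOp, ← sub_le_iff_le_add]
        refine le_csInf hSgne ?_
        rintro v ⟨k, hk, rfl⟩
        obtain ⟨k', hk', hkle⟩ := key_construct Ω hcl f g hf B a hfB p hp r hr0 hfg k hk
        have h1 : sInf {v : ℝ | ∃ k ∈ waveSet Ω {p} f, v = k z} ≤ k' z :=
          csInf_le hbddf ⟨k', hk', rfl⟩
        linarith [hkle z hz]
      have claim2 : waveOp Ω {p} g z ≤ waveOp Ω {p} f z + r := by
        rw [waveOp, waveOp, ← sub_le_iff_le_add]
        refine le_csInf hSfne ?_
        rintro v ⟨k, hk, rfl⟩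
        obtain ⟨k', hk', hkle⟩ := key_construct Ω hcl g f hg B b hgB p hp r hr0 hgf k hk
        have h1 : sInf {v : ℝ | ∃ k ∈ waveSet Ω {p} g, v = k z} ≤ k' z :=
          csInf_le hbddg ⟨k', hk', rfl⟩
        linarith [hkle z hz]
      exact abs_sub_le_iff.mpr ⟨by linarith, by linarith⟩
    · have hgempty : waveSet Ω {p} g = ∅ := Set.not_nonempty_iff_eq_empty.mp hgne
      have hfempty : waveSet Ω {p} f = ∅ := by
        rw [Set.eq_empty_iff_forall_notMem]
        intro k hk
        obtain ⟨k', hk', _⟩ := key_construct Ω hcl g f hg B b hgB p hp r hr0 hgf k hk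
        exact (Set.eq_empty_iff_forall_notMem.mp hgempty) k' hk'
      intro z hz
      have e1 : waveOp Ω {p} f z = 0 := by
        rw [waveOp, show {v : ℝ | ∃ k ∈ waveSet Ω {p} f, v = k z} = (∅ : Set ℝ) by
          simp [hfempty], Real.sInf_empty]
      have e2 : waveOp Ω {p} g z = 0 := by
        rw [waveOp, show {v : ℝ | ∃ k ∈ waveSet Ω {p} g, v = k z} = (∅ : Set ℝ) by
          simp [hgempty], Real.sInf_empty]
      rw [e1, e2]
      simpa using hr0
  rw [canonCoef, canonCoef]
  refine sup_transfer hΩne hr0 ?_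
  intro z hz
  have := hpt z hz
  calc |waveOp Ω {p} f z - (ij.1 : ℝ) * z.1 - (ij.2 : ℝ) * z.2 -
      (waveOp Ω {p} g z - (ij.1 : ℝ) * z.1 - (ij.2 : ℝ) * z.2)|
      = |waveOp Ω {p} f z - waveOp Ω {p} g z| := by ring_nf
  _ ≤ r := this
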